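/- Let G be a graph with all vertex degrees odd, such that |E(G)| − |V(G)|/2 is odd. If G is interval colorable, then w(G) ≥ max{Δ(G), 2·δ(G)}. -/

import Mathlib

/-- The set of colors appearing on edges incident to `v` under edge coloring `c`. -/
def colorsAt {V : Type*} (G : SimpleGraph V) (c : Sym2 V → ℕ) (v : V) : Set ℕ :=
  {i | ∃ e ∈ G.edgeSet, v ∈ e ∧ c e = i}

/-- A set of naturals is an interval of consecutive integers. -/
def IsIntervalSet (S : Set ℕ) : Prop :=
  ∀ i j k, i ∈ S → j ∈ S → i ≤ k → k ≤ j → k ∈ S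

/-- `c` is a proper edge coloring of `G`: distinct edges sharing a vertex get
different colors. -/
def IsProperEdgeColoring {V : Type*} (G : SimpleGraph V) (c : Sym2 V → ℕ) : Prop :=
  ∀ e₁ ∈ G.edgeSet, ∀ e₂ ∈ G.edgeSet, e₁ ≠ e₂ → (∃ v, v ∈ e₁ ∧ v ∈ e₂) → c e₁ ≠ c e₂

/-- An interval `t`-coloring: proper edge coloring with colors `1,…,t`, every color
used, and the colors at each vertex forming an interval of consecutive integers. -/
def IsIntervalColoring {V : Type*} (G : SimpleGraph V) (t : ℕ) (c : Sym2 V → ℕ) : Prop :=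
  IsProperEdgeColoring G c ∧
  (∀ e ∈ G.edgeSet, c e ∈ Set.Icc 1 t) ∧
  (∀ i ∈ Set.Icc 1 t, ∃ e ∈ G.edgeSet, c e = i) ∧
  (∀ v, IsIntervalSet (colorsAt G c v))

/-- A cyclic interval `t`-coloring: proper edge coloring with colors `1,…,t`, every
color used, and for each vertex the set of colors at it, or its complement in
`{1,…,t}`, is an interval of consecutive integers. -/
def IsCyclicIntervalColoring {V : Type*} (G : SimpleGraph V) (t : ℕ) (c : Sym2 V → ℕ) : Prop :=
  IsProperEdgeColoring G c ∧
  (∀ e ∈ G.edgeSet, c e ∈ Set.Icc 1 t) ∧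
  (∀ i ∈ Set.Icc 1 t, ∃ e ∈ G.edgeSet, c e = i) ∧
  (∀ v, IsIntervalSet (colorsAt G c v) ∨ IsIntervalSet (Set.Icc 1 t \ colorsAt G c v))

/-- If all degrees of `G` are odd and `|E(G)| − |V(G)|/2` is odd, then any interval
`t`-coloring of `G` satisfies `t ≥ max {Δ(G), 2·δ(G)}`. -/
lemma odd_card_range (n : ℕ) : ((Finset.range n).filter (fun x => Odd x)).card = n / 2 := by
  induction n with
  | zero => simp
  | succ n ih =>
    rw [Finset.range_add_one, Finset.filter_insert]
    by_cases hn : Odd n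
    · rw [if_pos hn, Finset.card_insert_of_notMem (by simp)]
      rw [ih]
      rw [Nat.odd_iff] at hn
      omega
    · rw [if_neg hn, ih]
      rw [Nat.not_odd_iff] at hn
      omega

lemma odd_card_Icc (a b : ℕ) (hab : a ≤ b + 1) :
    ((Finset.Icc a b).filter (fun x => Odd x)).card = (b + 1) / 2 - a / 2 := by
  have hsplit : Finset.range a ∪ Finset.Icc a b = Finset.range (b + 1) := by
    rw [Finset.range_eq_Ico, Finset.range_eq_Ico, ← Finset.Ico_add_one_right_eq_Icc]
    exact Finset.Ico_union_Ico_eq_Ico (Nat.zero_le a) hab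
  have hdisj : Disjoint ((Finset.range a).filter (fun x => Odd x))
      ((Finset.Icc a b).filter (fun x => Odd x)) := by
    apply Finset.disjoint_filter_filter
    rw [Finset.disjoint_left]
    intro x hx hx'
    simp only [Finset.mem_range] at hx
    simp only [Finset.mem_Icc] at hx'
    omega
  have := Finset.card_union_of_disjoint hdisj
  rw [← Finset.filter_union, hsplit, odd_card_range, odd_card_range] at this
  omega

lemma sum_card_filter {V : Type*} [Fintype V] [DecidableEq V] (G : SimpleGraph V)
    [DecidableRel G.Adj] (p : Sym2 V → Prop) [DecidablePred p] :
    ∑ v, ((G.incidenceFinset v).filter p).card = 2 * (G.edgeFinset.filter p).card := by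
  have hinc : ∀ v : V, (G.incidenceFinset v).filter p
      = G.edgeFinset.filter (fun e => v ∈ e ∧ p e) := by
    intro v
    ext e
    simp only [Finset.mem_filter, SimpleGraph.mem_incidenceFinset, SimpleGraph.incidenceSet,
      Set.mem_setOf_eq, SimpleGraph.mem_edgeFinset]
    tauto
  calc ∑ v, ((G.incidenceFinset v).filter p).card
      = ∑ v, ∑ e ∈ G.edgeFinset, (if v ∈ e ∧ p e then 1 else 0) := by
        refine Finset.sum_congr rfl fun v _ => ?_
        rw [hinc v, Finset.card_filter]
    _ = ∑ e ∈ G.edgeFinset, ∑ v, (if v ∈ e ∧ p e then 1 else 0) := Finset.sum_comm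
    _ = ∑ e ∈ G.edgeFinset, (if p e then 2 else 0) := by
        refine Finset.sum_congr rfl fun e he => ?_
        by_cases hp : p e
        · simp only [hp, and_true, if_true]
          rw [← Finset.card_filter]
          have hed : ¬ e.IsDiag := by
            rw [SimpleGraph.mem_edgeFinset] at he
            exact G.not_isDiag_of_mem_edgeSet he
          induction e with
          | h x y =>
            have hxy : x ≠ y := by simpa [Sym2.isDiag_iff_proj_eq] using hed
            have : Finset.univ.filter (fun v => v ∈ s(x, y)) = {x, y} := by
              ext v
              simp [Sym2.mem_iff]
            rw [this, Finset.card_insert_of_notMem (by simp [hxy]), Finset.card_singleton]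
        · simp [hp]
    _ = 2 * (G.edgeFinset.filter p).card := by
        rw [Finset.sum_ite, Finset.sum_const, Finset.sum_const]
        simp [mul_comm]


theorem stmt5 {V : Type*} [Fintype V] [DecidableEq V] (G : SimpleGraph V)
    [DecidableRel G.Adj]
    (hoddG : ∀ v : V, Odd (G.degree v))
    (hodd : Odd ((G.edgeFinset.card : ℤ) - (Fintype.card V : ℤ) / 2))
    (t : ℕ) (c : Sym2 V → ℕ) (h : IsIntervalColoring G t c) :
    max G.maxDegree (2 * G.minDegree) ≤ t := by
  classical
  obtain ⟨hprop, hmem, -, hint⟩ := h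
  rcases isEmpty_or_nonempty V with hV | hV
  · have : G.maxDegree = 0 := by
      simp [SimpleGraph.maxDegree, Finset.univ_eq_empty]
    have h2 : G.minDegree = 0 := by
      simp [SimpleGraph.minDegree, Finset.univ_eq_empty]
    simp [this, h2]
  set S : V → Finset ℕ := fun v => (G.incidenceFinset v).image c with hS
  have hdegpos : ∀ v, 1 ≤ G.degree v := fun v => (hoddG v).pos
  have hinj : ∀ v : V, Set.InjOn c (G.incidenceFinset v) := by
    intro v e₁ he₁ e₂ he₂ hce
    by_contra hne
    simp only [Finset.coe_sort_coe, Finset.mem_coe, SimpleGraph.mem_incidenceFinset] at he₁ he₂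
    exact hprop e₁ he₁.1 e₂ he₂.1 hne ⟨v, he₁.2, he₂.2⟩ hce
  have hcard : ∀ v, (S v).card = G.degree v := by
    intro v
    rw [hS]
    simp only
    rw [Finset.card_image_of_injOn (hinj v), SimpleGraph.card_incidenceFinset_eq_degree]
  have hne : ∀ v, (S v).Nonempty := by
    intro v
    rw [← Finset.card_pos, hcard]
    exact hdegpos v
  have hcolors : ∀ v, colorsAt G c v = ↑(S v) := by
    intro v
    ext i
    simp only [colorsAt, Set.mem_setOf_eq, hS, Finset.coe_image, Set.mem_image,
      Finset.mem_coe, SimpleGraph.mem_incidenceFinset, SimpleGraph.incidenceSet,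
      Set.mem_setOf_eq]
    constructor
    · rintro ⟨e, he, hv, rfl⟩; exact ⟨e, ⟨he, hv⟩, rfl⟩
    · rintro ⟨e, ⟨he, hv⟩, rfl⟩; exact ⟨e, he, hv, rfl⟩
  have hset : ∀ v, ∀ x ∈ S v, 1 ≤ x ∧ x ≤ t := by
    intro v x hx
    rw [hS] at hx
    simp only [Finset.mem_image, SimpleGraph.mem_incidenceFinset] at hx
    obtain ⟨e, he, rfl⟩ := hx
    exact (hmem e he.1 : c e ∈ Set.Icc 1 t)
  set a : V → ℕ := fun v => (S v).min' (hne v) with ha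
  have hIcc : ∀ v, S v = Finset.Icc (a v) (a v + G.degree v - 1) := by
    intro v
    have hmaxEq : (S v).max' (hne v) = a v + G.degree v - 1 := by
      have hsub : S v = Finset.Icc (a v) ((S v).max' (hne v)) := by
        apply Finset.Subset.antisymm
        · intro x hx
          rw [Finset.mem_Icc]
          exact ⟨Finset.min'_le _ _ hx, Finset.le_max' _ _ hx⟩
        · intro x hx
          rw [Finset.mem_Icc] at hx
          have hiv := hint v
          rw [hcolors v] at hiv
          have := hiv (a v) ((S v).max' (hne v)) x
            (Finset.mem_coe.mpr ((S v).min'_mem (hne v)))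
            (Finset.mem_coe.mpr ((S v).max'_mem (hne v))) hx.1 hx.2
          exact Finset.mem_coe.mp this
      have hle : a v ≤ (S v).max' (hne v) := Finset.min'_le _ _ ((S v).max'_mem (hne v))
      have hc := hcard v
      rw [hsub, Nat.card_Icc] at hc
      have := hdegpos v
      omega
    rw [← hmaxEq]
    apply Finset.Subset.antisymm
    · intro x hx
      rw [Finset.mem_Icc]
      exact ⟨Finset.min'_le _ _ hx, Finset.le_max' _ _ hx⟩
    · intro x hx
      rw [Finset.mem_Icc] at hx
      have hiv := hint v
      rw [hcolors v] at hiv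
      exact Finset.mem_coe.mp (hiv (a v) ((S v).max' (hne v)) x
        (Finset.mem_coe.mpr ((S v).min'_mem (hne v)))
        (Finset.mem_coe.mpr ((S v).max'_mem (hne v))) hx.1 hx.2)
  have hbounds : ∀ v, 1 ≤ a v ∧ a v + G.degree v - 1 ≤ t := by
    intro v
    have h1 := hset v (a v) ((S v).min'_mem (hne v))
    have h2 := hset v (a v + G.degree v - 1) (by
      rw [hIcc v]
      rw [Finset.mem_Icc]
      have := hdegpos v
      omega)
    exact ⟨h1.1, h2.2⟩
  -- bridge
  have hbridge : ∀ (q : ℕ → Prop) [DecidablePred q], ∀ v,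
      ((S v).filter q).card = ((G.incidenceFinset v).filter (fun e => q (c e))).card := by
    intro q _ v
    rw [hS]
    simp only
    rw [Finset.filter_image]
    exact Finset.card_image_of_injOn ((hinj v).mono (by
      intro x hx
      exact Finset.mem_coe.mpr (Finset.mem_of_mem_filter x (Finset.mem_coe.mp hx))))
  -- n even
  have hhand := SimpleGraph.sum_degrees_eq_twice_card_edges G
  have hnpar : Fintype.card V % 2 = 0 := by
    have h1 : (∑ v : V, G.degree v) % 2 = (∑ v : V, G.degree v % 2) % 2 :=
      Finset.sum_nat_mod _ _ _
    have h2 : ∀ v : V, G.degree v % 2 = 1 := fun v => Nat.odd_iff.mp (hoddG v)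
    rw [Finset.sum_congr rfl (fun v _ => h2 v), Finset.sum_const, Finset.card_univ,
      smul_eq_mul, mul_one, hhand] at h1
    omega
  obtain ⟨m, hm⟩ : ∃ m, Fintype.card V = 2 * m := ⟨Fintype.card V / 2, by omega⟩
  -- max degree part
  have hΔ : G.maxDegree ≤ t := by
    obtain ⟨v, hv⟩ := G.exists_maximal_degree_vertex
    rw [hv, ← hcard v]
    calc (S v).card ≤ (Finset.Icc 1 t).card := Finset.card_le_card (by
        intro x hx
        rw [Finset.mem_Icc]
        exact hset v x hx)
      _ = t := by rw [Nat.card_Icc]; omega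
  rw [max_le_iff]
  refine ⟨hΔ, ?_⟩
  by_contra hlt
  push_neg at hlt
  set δ := G.minDegree with hδ
  have hδle : ∀ v, δ ≤ G.degree v := fun v => G.minDegree_le_degree v
  have hrange : ∀ v, a v ≤ δ := by
    intro v
    have := hbounds v
    have := hδle v
    have := hdegpos v
    omega
  -- parity counting 1: odd colors
  have hO : ∀ v, 2 * ((S v).filter (fun x => Odd x)).card + 1
      = G.degree v + 2 * (a v % 2) := by
    intro v
    rw [hIcc v, odd_card_Icc _ _ (by have := hdegpos v; omega)]
    have hd := Nat.odd_iff.mp (hoddG v)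
    have := hdegpos v
    omega
  have hL : ∀ v, ((S v).filter (fun x => x ≤ δ)).card + a v = δ + 1 := by
    intro v
    have hfe : (S v).filter (fun x => x ≤ δ) = Finset.Icc (a v) δ := by
      rw [hIcc v]
      ext x
      simp only [Finset.mem_filter, Finset.mem_Icc]
      have := hdegpos v
      have := hδle v
      have := hbounds v
      omega
    rw [hfe, Nat.card_Icc]
    have := hrange v
    omega
  -- sums
  have hsum1 : ∑ v : V, (2 * ((S v).filter (fun x => Odd x)).card + 1)
      = ∑ v : V, (G.degree v + 2 * (a v % 2)) :=
    Finset.sum_congr rfl fun v _ => hO v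
  have hsum2 : ∑ v : V, (((S v).filter (fun x => x ≤ δ)).card + a v)
      = ∑ v : V, (δ + 1) :=
    Finset.sum_congr rfl fun v _ => hL v
  have hE₁ : ∑ v : V, ((S v).filter (fun x => Odd x)).card
      = 2 * (G.edgeFinset.filter (fun e => Odd (c e))).card := by
    rw [Finset.sum_congr rfl fun v _ => hbridge (fun x => Odd x) v]
    exact sum_card_filter G _
  have hE₂ : ∑ v : V, ((S v).filter (fun x => x ≤ δ)).card
      = 2 * (G.edgeFinset.filter (fun e => c e ≤ δ)).card := by
    rw [Finset.sum_congr rfl fun v _ => hbridge (fun x => x ≤ δ) v]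
    exact sum_card_filter G _
  set A := ∑ v : V, a v with hA
  set A2 := ∑ v : V, (a v % 2) with hA2
  have hApar : A % 2 = A2 % 2 := by
    rw [hA, hA2]
    rw [Finset.sum_nat_mod]
  have heq1 : 4 * (G.edgeFinset.filter (fun e => Odd (c e))).card + Fintype.card V
      = 2 * G.edgeFinset.card + 2 * A2 := by
    have := hsum1
    rw [Finset.sum_add_distrib, Finset.sum_add_distrib, ← Finset.mul_sum, hE₁,
      Finset.sum_const, Finset.card_univ, smul_eq_mul, mul_one, hhand, ← Finset.mul_sum,
      ← hA2] at this
    omega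
  have heq2 : 2 * (G.edgeFinset.filter (fun e => c e ≤ δ)).card + A
      = Fintype.card V * (δ + 1) := by
    have := hsum2
    rw [Finset.sum_add_distrib, hE₂, ← hA, Finset.sum_const, Finset.card_univ,
      smul_eq_mul] at this
    exact this
  have hnδ : Fintype.card V * (δ + 1) = 2 * (m * (δ + 1)) := by rw [hm]; ring
  rw [hnδ] at heq2
  obtain ⟨k, hk⟩ := hodd
  have hcast : (Fintype.card V : ℤ) = 2 * (m : ℤ) := by exact_mod_cast congrArg Nat.cast hm
  rw [hcast] at hk
  have hk' : (G.edgeFinset.card : ℤ) = 2 * k + 1 + m := by omega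
  have hEm : (G.edgeFinset.card + m) % 2 = 1 := by omega
  omega
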